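/- The number of downward closed subsets of ℕ₀^d of cardinality exactly n is at most d^{n−1} (n−1)!. -/

import Mathlib

def DownwardClosed {d : ℕ} (Λ : Finset (Fin d → ℕ)) : Prop :=
  ∀ ν ∈ Λ, ∀ μ : Fin d → ℕ, μ ≤ ν → μ ∈ Λ

abbrev DCSet (d n : ℕ) := {Λ : Finset (Fin d → ℕ) // DownwardClosed Λ ∧ Λ.card = n}

noncomputable def decodeDC (d n : ℕ) (x : DCSet d n × Fin n × Fin d) :
    Finset (Fin d → ℕ) :=
  insert (Function.update (((Finset.equivFinOfCardEq x.1.2.2).symm x.2.1 : {y // y ∈ x.1.1}) : Fin d → ℕ) x.2.2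
      ((((Finset.equivFinOfCardEq x.1.2.2).symm x.2.1 : {y // y ∈ x.1.1}) : Fin d → ℕ) x.2.2 + 1)) x.1.1

lemma decodeDC_surj {d n : ℕ} (hn : 1 ≤ n) (Λ : Finset (Fin d → ℕ))
    (hDC : DownwardClosed Λ) (hcard : Λ.card = n + 1) :
    ∃ x : DCSet d n × Fin n × Fin d, decodeDC d n x = Λ := by
  have hne : Λ.Nonempty := Finset.card_pos.mp (by omega)
  obtain ⟨ν, hν, hmax⟩ := Λ.exists_maximal hne
  have h0 : (0 : Fin d → ℕ) ∈ Λ := hDC _ hν _ (fun i => Nat.zero_le _)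
  have hν0 : ν ≠ 0 := by
    rintro rfl
    have hsub : Λ ⊆ {0} := by
      intro b hb
      rw [Finset.mem_singleton]
      by_contra hne'
      exact hne' (le_antisymm (hmax hb (fun i => Nat.zero_le _)) (fun i => Nat.zero_le _))
    have := Finset.card_le_card hsub
    simp at this; omega
  obtain ⟨j, hj⟩ : ∃ j, ν j ≠ 0 := by
    by_contra h; push_neg at h
    exact hν0 (funext fun i => h i)
  set μ := Function.update ν j (ν j - 1) with hμdef
  have hμle : μ ≤ ν := by
    intro i
    by_cases hij : i = j
    · subst hij; simp only [hμdef, Function.update_self]; omega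
    · simp [hμdef, Function.update_of_ne hij]
  have hμne : μ ≠ ν := by
    intro h
    have := congrFun h j
    simp [hμdef] at this; omega
  have hμΛ : μ ∈ Λ := hDC _ hν _ hμle
  have hμΛ' : μ ∈ Λ.erase ν := Finset.mem_erase.mpr ⟨hμne, hμΛ⟩
  have hDC' : DownwardClosed (Λ.erase ν) := by
    intro a ha b hb
    rw [Finset.mem_erase] at ha ⊢
    refine ⟨?_, hDC _ ha.2 _ hb⟩
    rintro rfl
    exact ha.1 (le_antisymm (hmax ha.2 hb) hb)
  have hcard' : (Λ.erase ν).card = n := by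
    rw [Finset.card_erase_of_mem hν, hcard]; omega
  refine ⟨⟨⟨Λ.erase ν, hDC', hcard'⟩, (Finset.equivFinOfCardEq hcard') ⟨μ, hμΛ'⟩, j⟩, ?_⟩
  have hup : Function.update μ j (μ j + 1) = ν := by
    funext i
    by_cases hij : i = j
    · subst hij; simp [hμdef]; omega
    · simp [hμdef, Function.update_of_ne hij]
  simp only [decodeDC, Equiv.symm_apply_apply]
  rw [hup, Finset.insert_erase hν]

lemma finite_and_card (d : ℕ) (n : ℕ) : Finite (DCSet d n) ∧
    Nat.card (DCSet d n) ≤ d ^ (n - 1) * Nat.factorial (n - 1) := by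
  induction n with
  | zero =>
    have hsub : Subsingleton (DCSet d 0) := by
      constructor
      rintro ⟨Λ₁, _, h₁⟩ ⟨Λ₂, _, h₂⟩
      apply Subtype.ext
      show Λ₁ = Λ₂
      rw [Finset.card_eq_zero.mp h₁, Finset.card_eq_zero.mp h₂]
    refine ⟨Finite.of_subsingleton, ?_⟩
    simpa using (@Finite.card_le_one_iff_subsingleton _ Finite.of_subsingleton).mpr hsub
  | succ n ih =>
    rcases Nat.eq_zero_or_pos n with rfl | hn
    · have hsub : Subsingleton (DCSet d 1) := by
        constructor
        rintro ⟨Λ₁, hd₁, h₁⟩ ⟨Λ₂, hd₂, h₂⟩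
        apply Subtype.ext
        show Λ₁ = Λ₂
        obtain ⟨a, rfl⟩ := Finset.card_eq_one.mp h₁
        obtain ⟨b, rfl⟩ := Finset.card_eq_one.mp h₂
        have ha : (0 : Fin d → ℕ) ∈ ({a} : Finset _) :=
          hd₁ a (Finset.mem_singleton_self a) 0 (fun i => Nat.zero_le _)
        have hb : (0 : Fin d → ℕ) ∈ ({b} : Finset _) :=
          hd₂ b (Finset.mem_singleton_self b) 0 (fun i => Nat.zero_le _)
        rw [Finset.mem_singleton] at ha hb
        rw [← ha, ← hb]
      refine ⟨Finite.of_subsingleton, ?_⟩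
      simpa using (@Finite.card_le_one_iff_subsingleton _ Finite.of_subsingleton).mpr hsub
    · obtain ⟨hfin, hcard⟩ := ih
      have hf : ∀ Λ : DCSet d (n + 1), ∃ x : DCSet d n × Fin n × Fin d,
          decodeDC d n x = Λ.1 := fun Λ => decodeDC_surj hn Λ.1 Λ.2.1 Λ.2.2
      set f : DCSet d (n + 1) → DCSet d n × Fin n × Fin d :=
        fun Λ => (hf Λ).choose with hfdef
      have hgf : ∀ Λ, decodeDC d n (f Λ) = Λ.1 := fun Λ => (hf Λ).choose_spec
      have hinj : Function.Injective f := by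
        intro a b hab
        exact Subtype.ext (by rw [← hgf a, ← hgf b, hab])
      haveI : Finite (DCSet d n) := hfin
      haveI : Finite (DCSet d n × Fin n × Fin d) := inferInstance
      refine ⟨Finite.of_injective f hinj, ?_⟩
      calc Nat.card (DCSet d (n + 1)) ≤ Nat.card (DCSet d n × Fin n × Fin d) :=
            Nat.card_le_card_of_injective f hinj
        _ = Nat.card (DCSet d n) * (n * d) := by
            simp [Nat.card_prod, Nat.card_eq_fintype_card, mul_assoc]
        _ ≤ (d ^ (n - 1) * Nat.factorial (n - 1)) * (n * d) :=
            Nat.mul_le_mul_right _ hcard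
        _ = d ^ (n + 1 - 1) * Nat.factorial (n + 1 - 1) := by
            obtain ⟨m, rfl⟩ : ∃ m, n = m + 1 := ⟨n - 1, by omega⟩
            simp [Nat.factorial_succ, pow_succ]
            ring
  
theorem card_downwardClosed_le_factorial (d n : ℕ) :
    Nat.card {Λ : Finset (Fin d → ℕ) // DownwardClosed Λ ∧ Λ.card = n} ≤
      d ^ (n - 1) * Nat.factorial (n - 1) := by
  exact (finite_and_card d n).2
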